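/- arXiv:1903.06459 — 2 statements merged into one kernel-verified Lean document; each statement's English description precedes it below -/
import Mathlib

section
/- Let X be a normed space over 𝕜, Z ⊆ X a closed subspace, i : Z → X the inclusion and q : X → X/Z the quotient map. Then the range of the second dual map i** : Z** → X** equals the kernel of the second dual map q** : X** → (X/Z)**, where f** denotes (f*)*. -/
set_option maxHeartbeats 2000000


open NormedSpace

/-- The dual map `f ↦ f*`, where `f*(g) = g ∘ f`. -/
noncomputable def dualMapCLM {𝕜 : Type*} [RCLike 𝕜] {X Y : Type*} [SeminormedAddCommGroup X]
    [NormedSpace 𝕜 X] [SeminormedAddCommGroup Y] [NormedSpace 𝕜 Y] (f : X →L[𝕜] Y) :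
    StrongDual 𝕜 Y →L[𝕜] StrongDual 𝕜 X :=
  (ContinuousLinearMap.compL 𝕜 X Y 𝕜).flip f

/-- The quotient map `q : X → X/Z` as a continuous linear map. -/
noncomputable def mkQCLM {𝕜 : Type*} [RCLike 𝕜] {X : Type*} [NormedAddCommGroup X]
    [NormedSpace 𝕜 X] (Z : Submodule 𝕜 X) : X →L[𝕜] X ⧸ Z :=
  Z.mkQ.mkContinuous 1 (fun x => by simpa using Submodule.Quotient.norm_mk_le Z x)

lemma dualMapCLM_apply {𝕜 : Type*} [RCLike 𝕜] {X Y : Type*} [SeminormedAddCommGroup X]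
    [NormedSpace 𝕜 X] [SeminormedAddCommGroup Y] [NormedSpace 𝕜 Y] (f : X →L[𝕜] Y)
    (g : StrongDual 𝕜 Y) : dualMapCLM f g = g.comp f := rfl

lemma mkQCLM_apply {𝕜 : Type*} [RCLike 𝕜] {X : Type*} [NormedAddCommGroup X]
    [NormedSpace 𝕜 X] (Z : Submodule 𝕜 X) (x : X) :
    mkQCLM Z x = Submodule.Quotient.mk x := rfl

/-- Let `Z` be a closed subspace of a normed space `X` over `𝕜 ∈ {ℝ, ℂ}`,
`i : Z → X` the inclusion and `q : X → X/Z` the quotient map. Then the range of the second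
dual map `i** : Z** → X**` equals the kernel of the second dual map `q** : X** → (X/Z)**`. -/
theorem range_bidualMap_inclusion_eq_ker_bidualMap_quotient {𝕜 : Type*} [RCLike 𝕜]
    {X : Type*} [NormedAddCommGroup X] [NormedSpace 𝕜 X]
    (Z : Submodule 𝕜 X) (hZ : IsClosed (Z : Set X)) :
    LinearMap.range (dualMapCLM (dualMapCLM Z.subtypeL)).toLinearMap =
      LinearMap.ker (dualMapCLM (dualMapCLM (mkQCLM Z))).toLinearMap := by
  ext F
  simp only [LinearMap.mem_range, LinearMap.mem_ker]
  constructor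
  · rintro ⟨Φ, rfl⟩
    ext h
    have h0 : (h.comp (mkQCLM Z)).comp Z.subtypeL = 0 := by
      ext z
      simp [mkQCLM_apply, (Submodule.Quotient.mk_eq_zero Z).2 z.2]
    simp [dualMapCLM_apply, h0]
  · intro hF
    have hF' : ∀ h : StrongDual 𝕜 (X ⧸ Z), F (h.comp (mkQCLM Z)) = 0 := by
      intro h
      have := congrArg (fun T : StrongDual 𝕜 (StrongDual 𝕜 (X ⧸ Z)) => T h) hF
      simpa [dualMapCLM_apply] using this
    -- Key: F vanishes on functionals vanishing on Z.
    have key : ∀ f : StrongDual 𝕜 X, (∀ z ∈ Z, f z = 0) → F f = 0 := by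
      intro f hf
      set g : (X ⧸ Z) →ₗ[𝕜] 𝕜 := Z.liftQ (f : X →ₗ[𝕜] 𝕜) (fun z hz => hf z hz) with hg
      have hb : ∀ y : X ⧸ Z, ‖g y‖ ≤ ‖f‖ * ‖y‖ := by
        intro y
        refine le_of_forall_pos_le_add ?_
        intro ε hε
        obtain ⟨m, rfl, hm⟩ :=
          Submodule.Quotient.norm_mk_lt y (div_pos hε (by positivity : (0:ℝ) < ‖f‖ + 1))
        have hgm : g (Submodule.Quotient.mk m) = f m := rfl
        rw [hgm]
        have h1 : ‖f m‖ ≤ ‖f‖ * ‖m‖ := f.le_opNorm m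
        have h2 : ‖f‖ * ‖m‖ ≤ ‖f‖ * (‖(Submodule.Quotient.mk m : X ⧸ Z)‖ + ε / (‖f‖ + 1)) :=
          mul_le_mul_of_nonneg_left (le_of_lt hm) (norm_nonneg _)
        have h3 : ‖f‖ * (ε / (‖f‖ + 1)) ≤ ε := by
          rw [div_eq_inv_mul]
          have hf0 : (0:ℝ) ≤ ‖f‖ := norm_nonneg _
          have : ‖f‖ * ((‖f‖ + 1)⁻¹ * ε) = (‖f‖ / (‖f‖ + 1)) * ε := by ring
          rw [this]
          calc (‖f‖ / (‖f‖ + 1)) * ε ≤ 1 * ε := by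
                apply mul_le_mul_of_nonneg_right _ hε.le
                rw [div_le_one (by positivity)]; linarith
            _ = ε := one_mul ε
        nlinarith [norm_nonneg (Submodule.Quotient.mk m : X ⧸ Z)]
      set h : StrongDual 𝕜 (X ⧸ Z) := LinearMap.mkContinuous g ‖f‖ hb with hh
      have hcomp : h.comp (mkQCLM Z) = f := by ext x; rfl
      rw [← hcomp]
      exact hF' h
    have key2 : ∀ f f' : StrongDual 𝕜 X, (∀ z : Z, f z = f' z) → F f = F f' := by
      intro f f' hff'
      have := key (f - f') (by
        intro z hz
        simpa using sub_eq_zero.2 (hff' ⟨z, hz⟩))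
      rw [map_sub, sub_eq_zero] at this
      exact this
    -- Hahn-Banach extension operator
    choose e he hne using fun g : StrongDual 𝕜 Z => exists_extension_norm_eq Z g
    set ψlin : StrongDual 𝕜 Z →ₗ[𝕜] 𝕜 :=
      { toFun := fun g => F (e g)
        map_add' := by
          intro g₁ g₂
          show F (e (g₁ + g₂)) = F (e g₁) + F (e g₂)
          have : F (e (g₁ + g₂)) = F (e g₁ + e g₂) := by
            apply key2
            intro z
            simp [he (g₁ + g₂) z, he g₁ z, he g₂ z]
          rw [this, map_add]
        map_smul' := by
          intro c g
          show F (e (c • g)) = (RingHom.id 𝕜) c • F (e g)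
          have : F (e (c • g)) = F (c • e g) := by
            apply key2
            intro z
            simp [he (c • g) z, he g z]
          rw [this, map_smul]
          rfl } with hψ
    have ψbound : ∀ g : StrongDual 𝕜 Z, ‖ψlin g‖ ≤ ‖F‖ * ‖g‖ := by
      intro g
      calc ‖F (e g)‖ ≤ ‖F‖ * ‖e g‖ := F.le_opNorm _
        _ = ‖F‖ * ‖g‖ := by rw [hne g]
    refine ⟨LinearMap.mkContinuous ψlin ‖F‖ ψbound, ?_⟩
    ext f
    show F (e (f.comp Z.subtypeL)) = F f
    apply key2
    intro z
    simpa using he (f.comp Z.subtypeL) z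
end

section
/- Let X be a normed space over 𝕜, Z ⊆ X a closed subspace and q : X → X/Z the quotient map. Then the dual map q* : (X/Z)* → X* is a linear isometry whose range is exactly the annihilator Z⁰ = {φ ∈ X* : φ vanishes on Z}; consequently (X/Z)* is isometrically isomorphic to Z⁰. -/
open NormedSpace

/-- The annihilator `Z⁰ = {φ ∈ X* : φ vanishes on Z}` of a subspace `Z` of `X`, as a
submodule of the continuous dual `X*`. -/
noncomputable def annihilatorCLM {𝕜 : Type*} [RCLike 𝕜] {X : Type*} [NormedAddCommGroup X]
    [NormedSpace 𝕜 X] (Z : Submodule 𝕜 X) : Submodule 𝕜 (StrongDual 𝕜 X) where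
  carrier := {φ : StrongDual 𝕜 X | ∀ x ∈ Z, φ x = 0}
  add_mem' := by intro a b ha hb x hx; simp [ha x hx, hb x hx]
  zero_mem' := by intro x hx; simp
  smul_mem' := by intro c φ hφ x hx; simp [hφ x hx]

section Aux

variable {𝕜 : Type*} [RCLike 𝕜] {X : Type*} [NormedAddCommGroup X] [NormedSpace 𝕜 X]
  (Z : Submodule 𝕜 X)

lemma dualMapCLM_mkQCLM_apply (g : StrongDual 𝕜 (X ⧸ Z)) (x : X) :
    dualMapCLM (mkQCLM Z) g x = g (Submodule.Quotient.mk x) := rfl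

lemma quot_bound (g₀ : (X ⧸ Z) →ₗ[𝕜] 𝕜) (C : ℝ) (hC : 0 ≤ C)
    (h : ∀ x : X, ‖g₀ (Submodule.Quotient.mk x)‖ ≤ C * ‖x‖) (y : X ⧸ Z) :
    ‖g₀ y‖ ≤ C * ‖y‖ := by
  refine le_of_forall_pos_le_add fun ε hε => ?_
  have hδ : (0:ℝ) < ε / (C + 1) := by positivity
  obtain ⟨x, rfl, hxn⟩ := Submodule.Quotient.norm_mk_lt y hδ
  calc ‖g₀ (Submodule.Quotient.mk x)‖ ≤ C * ‖x‖ := h x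
    _ ≤ C * (‖(Submodule.Quotient.mk x : X ⧸ Z)‖ + ε / (C + 1)) :=
        mul_le_mul_of_nonneg_left hxn.le hC
    _ ≤ C * ‖(Submodule.Quotient.mk x : X ⧸ Z)‖ + ε := by
        have h1 : C * (ε / (C + 1)) ≤ ε := by
          rw [div_eq_inv_mul, ← mul_assoc]
          have : C * (C + 1)⁻¹ ≤ 1 := by
            rw [mul_inv_le_iff₀ (by positivity)]; linarith
          nlinarith
        nlinarith

lemma isom (g : StrongDual 𝕜 (X ⧸ Z)) : ‖dualMapCLM (mkQCLM Z) g‖ = ‖g‖ := by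
  refine le_antisymm ?_ ?_
  · refine ContinuousLinearMap.opNorm_le_bound _ (norm_nonneg g) fun x => ?_
    rw [dualMapCLM_mkQCLM_apply]
    calc ‖g (Submodule.Quotient.mk x)‖ ≤ ‖g‖ * ‖(Submodule.Quotient.mk x : X ⧸ Z)‖ :=
          g.le_opNorm _
      _ ≤ ‖g‖ * ‖x‖ :=
          mul_le_mul_of_nonneg_left (Submodule.Quotient.norm_mk_le Z x) (norm_nonneg g)
  · refine ContinuousLinearMap.opNorm_le_bound _ (norm_nonneg _) fun y => ?_
    exact quot_bound Z g.toLinearMap ‖dualMapCLM (mkQCLM Z) g‖ (norm_nonneg _)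
      (fun x => (dualMapCLM (mkQCLM Z) g).le_opNorm x) y

lemma range_eq :
    Set.range ⇑(dualMapCLM (mkQCLM Z)) = {φ : StrongDual 𝕜 X | ∀ x ∈ Z, φ x = 0} := by
  ext φ
  constructor
  · rintro ⟨g, rfl⟩ x hx
    rw [dualMapCLM_mkQCLM_apply, (Submodule.Quotient.mk_eq_zero Z).mpr hx, map_zero]
  · intro hφ
    have hker : Z ≤ LinearMap.ker (φ : X →ₗ[𝕜] 𝕜) := fun x hx => hφ x hx
    set g₀ : (X ⧸ Z) →ₗ[𝕜] 𝕜 := Z.liftQ (φ : X →ₗ[𝕜] 𝕜) hker with hg₀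
    have hcomp : ∀ x : X, g₀ (Submodule.Quotient.mk x) = φ x := fun x => rfl
    have hb : ∀ y, ‖g₀ y‖ ≤ ‖φ‖ * ‖y‖ := by
      refine quot_bound Z g₀ ‖φ‖ (norm_nonneg _) fun x => ?_
      rw [hcomp]; exact φ.le_opNorm x
    refine ⟨g₀.mkContinuous ‖φ‖ hb, ?_⟩
    ext x
    exact hcomp x

end Aux

/-- Let `Z` be a closed subspace of a normed space `X` over `𝕜 ∈ {ℝ, ℂ}` and
`q : X → X/Z` the quotient map. Then the dual map `q* : (X/Z)* → X*` is a linear isometry whose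
range is exactly the annihilator `Z⁰`; consequently `(X/Z)*` is isometrically isomorphic
to `Z⁰`. -/
theorem dualMap_quotient_isometry_range_annihilator {𝕜 : Type*} [RCLike 𝕜]
    {X : Type*} [NormedAddCommGroup X] [NormedSpace 𝕜 X]
    (Z : Submodule 𝕜 X) (hZ : IsClosed (Z : Set X)) :
    (∀ g : StrongDual 𝕜 (X ⧸ Z), ‖dualMapCLM (mkQCLM Z) g‖ = ‖g‖) ∧
    Set.range ⇑(dualMapCLM (mkQCLM Z)) = {φ : StrongDual 𝕜 X | ∀ x ∈ Z, φ x = 0} ∧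
    Nonempty (StrongDual 𝕜 (X ⧸ Z) ≃ₗᵢ[𝕜] annihilatorCLM Z) := by
  refine ⟨isom Z, range_eq Z, ?_⟩
  have hmem : ∀ g : StrongDual 𝕜 (X ⧸ Z), dualMapCLM (mkQCLM Z) g ∈ annihilatorCLM Z := by
    intro g
    have := (range_eq Z).le ⟨g, rfl⟩
    exact this
  set L : StrongDual 𝕜 (X ⧸ Z) →ₗᵢ[𝕜] annihilatorCLM Z :=
    { toFun := fun g => ⟨dualMapCLM (mkQCLM Z) g, hmem g⟩
      map_add' := fun a b => by ext; simp
      map_smul' := fun c a => by ext; simp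
      norm_map' := fun g => isom Z g } with hL
  refine ⟨LinearIsometryEquiv.ofSurjective L fun ⟨φ, hφ⟩ => ?_⟩
  obtain ⟨g, hg⟩ := (range_eq Z).ge hφ
  exact ⟨g, Subtype.ext hg⟩
end
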